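/- arXiv:2303.07934 — 3 statements merged into one kernel-verified Lean document; each statement's English description precedes it below -/
import Mathlib

section
/- For every prime p, Σ_{k=1}^{p-1} ⌊k^5/p⌋ = (1/12)·(p-2)(p-1)(p+1)(2p^2 - 2p + 3). -/
open Finset

lemma pair_lemma (p : ℕ) (hp : p.Prime) (k : ℕ) (hk1 : 1 ≤ k) (hk2 : k ≤ p - 1) :
    k ^ 5 % p + (p - k) ^ 5 % p = p := by
  have hp1 : 1 < p := hp.one_lt
  have hkp : k < p := by omega
  have hd : p ∣ k ^ 5 + (p - k) ^ 5 := by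
    have : ((k ^ 5 + (p - k) ^ 5 : ℕ) : ZMod p) = 0 := by
      push_cast [Nat.cast_sub hkp.le]
      ring_nf
      simp
    exact (ZMod.natCast_eq_zero_iff _ _).mp this
  have ha : k ^ 5 % p ≠ 0 := by
    intro h
    have h2 : p ∣ k := hp.dvd_of_dvd_pow (Nat.dvd_of_mod_eq_zero h)
    have := Nat.le_of_dvd (by omega) h2
    omega
  have hb : (p - k) ^ 5 % p ≠ 0 := by
    intro h
    have h2 : p ∣ p - k := hp.dvd_of_dvd_pow (Nat.dvd_of_mod_eq_zero h)
    have := Nat.le_of_dvd (by omega) h2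
    omega
  have hlt1 : k ^ 5 % p < p := Nat.mod_lt _ (by omega)
  have hlt2 : (p - k) ^ 5 % p < p := Nat.mod_lt _ (by omega)
  have h0 : (k ^ 5 % p + (p - k) ^ 5 % p) % p = 0 := by
    rw [← Nat.add_mod]
    obtain ⟨c, hc⟩ := hd
    rw [hc]
    exact Nat.mul_mod_right p c
  obtain ⟨c, hc⟩ := Nat.dvd_of_mod_eq_zero h0
  have hc2 : c < 2 := by
    by_contra h
    have : p * 2 ≤ p * c := Nat.mul_le_mul_left p (by omega)
    omega
  have hc0 : c ≠ 0 := by rintro rfl; simp at hc; omega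
  have hc1 : c = 1 := by omega
  subst hc1
  omega

lemma mod_sum (p : ℕ) (hp : p.Prime) :
    2 * ∑ i ∈ range (p - 1), (1 + i) ^ 5 % p = p * (p - 1) := by
  have hp1 : 1 < p := hp.one_lt
  have hrefl := Finset.sum_range_reflect (fun i => (1 + i) ^ 5 % p) (p - 1)
  calc 2 * ∑ i ∈ range (p - 1), (1 + i) ^ 5 % p
      = (∑ i ∈ range (p - 1), (1 + i) ^ 5 % p) +
        ∑ i ∈ range (p - 1), (1 + (p - 1 - 1 - i)) ^ 5 % p := by rw [hrefl]; ring
    _ = ∑ i ∈ range (p - 1), p := by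
        rw [← Finset.sum_add_distrib]
        apply Finset.sum_congr rfl
        intro i hi
        simp only [Finset.mem_range] at hi
        have h1 : 1 + (p - 1 - 1 - i) = p - (1 + i) := by omega
        rw [h1]
        exact pair_lemma p hp (1 + i) (by omega) (by omega)
    _ = p * (p - 1) := by simp [mul_comm]

lemma sum_pow5 (n : ℕ) : ∑ i ∈ range n, ((1 + i : ℕ) : ℚ) ^ 5 =
    (n : ℚ) ^ 2 * ((n : ℚ) + 1) ^ 2 * (2 * (n : ℚ) ^ 2 + 2 * n - 1) / 12 := by
  induction n with
  | zero => simp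
  | succ m ih => rw [Finset.sum_range_succ, ih]; push_cast; ring

theorem stmt_9 (p : ℕ) (hp : p.Prime) :
    (∑ k ∈ Finset.Icc 1 (p - 1), (⌊((k : ℚ) ^ 5) / p⌋ : ℚ)) =
      (1 / 12) * ((p : ℚ) - 2) * ((p : ℚ) - 1) * ((p : ℚ) + 1) *
        (2 * (p : ℚ) ^ 2 - 2 * p + 3) := by
  have hp1 : 1 < p := hp.one_lt
  have hpQ : (p : ℚ) ≠ 0 := by
    exact_mod_cast hp.pos.ne'
  have hIcc : Finset.Icc 1 (p - 1) = Finset.Ico 1 p := by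
    rw [← Finset.Ico_add_one_right_eq_Icc]
    congr 1
    omega
  rw [hIcc, Finset.sum_Ico_eq_sum_range]
  have key : ∀ i ∈ range (p - 1),
      (⌊((1 + i : ℕ) : ℚ) ^ 5 / p⌋ : ℚ) =
        (((1 + i) ^ 5 : ℕ) : ℚ) / p - (((1 + i) ^ 5 % p : ℕ) : ℚ) / p := by
    intro i _
    have h1 : ((1 + i : ℕ) : ℚ) ^ 5 = ((((1 + i) ^ 5 : ℕ) : ℤ) : ℚ) := by push_cast; ring
    rw [h1, Rat.floor_intCast_div_natCast]
    have h2 : (((1 + i) ^ 5 : ℕ) : ℤ) / (p : ℤ) = (((1 + i) ^ 5 / p : ℕ) : ℤ) :=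
      (Int.natCast_div _ _).symm
    rw [h2]
    have h3 := Nat.div_add_mod ((1 + i) ^ 5) p
    have h3q : (p : ℚ) * (((1 + i) ^ 5 / p : ℕ) : ℚ) + (((1 + i) ^ 5 % p : ℕ) : ℚ) =
        (((1 + i) ^ 5 : ℕ) : ℚ) := by exact_mod_cast h3
    rw [Int.cast_natCast, ← sub_div, eq_div_iff hpQ]
    linarith
  rw [Finset.sum_congr rfl key, Finset.sum_sub_distrib, ← Finset.sum_div, ← Finset.sum_div]
  have hmods : ∑ i ∈ range (p - 1), (((1 + i) ^ 5 % p : ℕ) : ℚ) =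
      (p : ℚ) * ((p : ℚ) - 1) / 2 := by
    have h := congrArg (fun n : ℕ => (n : ℚ)) (mod_sum p hp)
    push_cast [Nat.cast_sub hp1.le] at h
    linarith
  have hpows : ∑ i ∈ range (p - 1), (((1 + i) ^ 5 : ℕ) : ℚ) =
      ((p : ℚ) - 1) ^ 2 * (p : ℚ) ^ 2 * (2 * (p : ℚ) ^ 2 - 2 * p - 1) / 12 := by
    have := sum_pow5 (p - 1)
    push_cast [Nat.cast_sub hp1.le] at this ⊢
    rw [this]
    ring
  rw [hpows, hmods]
  field_simp
  ring
end

section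
/- For every prime p, Σ_{k=1}^{p-1} ⌊k^9/p⌋ = (1/20)·(p-2)(p-1)(p+1)(2p^6 - 6p^5 + 5p^4 + 3p^2 - 4p + 5). -/
open Finset

lemma sum_pow_nine (n : ℕ) :
    (∑ k ∈ Finset.Icc 1 n, (k : ℚ) ^ 9) =
      (2 * (n:ℚ)^10 + 10 * n^9 + 15 * n^8 - 14 * n^6 + 10 * n^4 - 3 * n^2) / 20 := by
  induction n with
  | zero => simp
  | succ m ih =>
    rw [Finset.sum_Icc_succ_top (by omega), ih]
    push_cast
    ring

lemma mod_pair (p : ℕ) (hp : p.Prime) (k : ℕ) (hk1 : 1 ≤ k) (hk2 : k ≤ p - 1) :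
    k ^ 9 % p + (p - k) ^ 9 % p = p := by
  have hp2 := hp.two_le
  have hkp : k < p := by omega
  have h1 : ¬ p ∣ k ^ 9 := by
    intro h
    have := hp.dvd_of_dvd_pow h
    exact absurd (Nat.le_of_dvd (by omega) this) (by omega)
  have h2 : ¬ p ∣ (p - k) ^ 9 := by
    intro h
    have := hp.dvd_of_dvd_pow h
    exact absurd (Nat.le_of_dvd (by omega) this) (by omega)
  have hdvd : p ∣ k ^ 9 + (p - k) ^ 9 := by
    have hz : ((p:ℤ) - k) ≡ -(k:ℤ) [ZMOD p] := by
      have h0 : (p:ℤ) ≡ 0 [ZMOD p] := Int.modEq_zero_iff_dvd.mpr dvd_rfl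
      simpa using h0.sub_right (k:ℤ)
    have hz9 : ((p:ℤ) - k) ^ 9 ≡ -((k:ℤ) ^ 9) [ZMOD p] := by
      have h9 := hz.pow 9
      rwa [Odd.neg_pow (by decide : Odd 9)] at h9
    have hs : (k:ℤ) ^ 9 + ((p:ℤ) - k) ^ 9 ≡ 0 [ZMOD p] := by
      have := (Int.ModEq.refl ((k:ℤ) ^ 9)).add hz9
      simpa using this
    have hzd : (p:ℤ) ∣ (k:ℤ) ^ 9 + ((p:ℤ) - k) ^ 9 :=
      Int.modEq_zero_iff_dvd.mp hs
    have hcast : ((k ^ 9 + (p - k) ^ 9 : ℕ) : ℤ) = (k:ℤ) ^ 9 + ((p:ℤ) - k) ^ 9 := by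
      push_cast [Nat.cast_sub hkp.le]
      ring
    exact_mod_cast hcast ▸ hzd
  have hm1 : k ^ 9 % p < p := Nat.mod_lt _ (by omega)
  have hm2 : (p - k) ^ 9 % p < p := Nat.mod_lt _ (by omega)
  have hm1' : k ^ 9 % p ≠ 0 := fun h => h1 (Nat.dvd_of_mod_eq_zero h)
  have hm2' : (p - k) ^ 9 % p ≠ 0 := fun h => h2 (Nat.dvd_of_mod_eq_zero h)
  have hsum : p ∣ k ^ 9 % p + (p - k) ^ 9 % p := by
    have h0 : (k ^ 9 + (p - k) ^ 9) % p = 0 := Nat.eq_zero_of_dvd_of_lt ((Nat.dvd_mod_iff dvd_rfl).mpr hdvd) (Nat.mod_lt _ (by omega)) 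
    have h := Nat.add_mod (k ^ 9) ((p - k) ^ 9) p
    rw [h0] at h
    exact Nat.dvd_of_mod_eq_zero h.symm
  have hle : p ≤ k ^ 9 % p + (p - k) ^ 9 % p := Nat.le_of_dvd (by omega) hsum
  have hsub : p ∣ k ^ 9 % p + (p - k) ^ 9 % p - p := Nat.dvd_sub hsum dvd_rfl
  have hz : k ^ 9 % p + (p - k) ^ 9 % p - p = 0 :=
    Nat.eq_zero_of_dvd_of_lt hsub (by omega)
  omega

theorem stmt_11 (p : ℕ) (hp : p.Prime) :
    (∑ k ∈ Finset.Icc 1 (p - 1), (⌊((k : ℚ) ^ 9) / p⌋ : ℚ)) =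
      (1 / 20) * ((p : ℚ) - 2) * ((p : ℚ) - 1) * ((p : ℚ) + 1) *
        (2 * (p : ℚ) ^ 6 - 6 * (p : ℚ) ^ 5 + 5 * (p : ℚ) ^ 4 + 3 * (p : ℚ) ^ 2
          - 4 * p + 5) := by
  have hp2 := hp.two_le
  have hpQ : (p:ℚ) ≠ 0 := Nat.cast_ne_zero.mpr (by omega)
  have hfloor : ∀ k ∈ Finset.Icc 1 (p-1), (⌊((k : ℚ) ^ 9) / p⌋ : ℚ) = ((k ^ 9 / p : ℕ) : ℚ) := by
    intro k hk
    have h0 : (0:ℚ) ≤ (k:ℚ)^9 / p := by positivity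
    rw [← natCast_floor_eq_intCast_floor h0]
    have hcast : ((k:ℚ))^9 / p = ((k^9 : ℕ) : ℚ) / ((p:ℕ) : ℚ) := by push_cast; ring
    rw [hcast, Nat.floor_div_eq_div]
  rw [Finset.sum_congr rfl hfloor]
  have hmod2 : (∑ k ∈ Finset.Icc 1 (p-1), (k ^ 9 % p)) * 2 = p * (p - 1) := by
    have hrefl : ∑ k ∈ Finset.Icc 1 (p-1), ((p - k) ^ 9 % p)
        = ∑ k ∈ Finset.Icc 1 (p-1), (k ^ 9 % p) := by
      apply Finset.sum_nbij' (i := fun k => p - k) (j := fun k => p - k) <;>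
        simp_all [Finset.mem_Icc] <;> omega
    calc (∑ k ∈ Finset.Icc 1 (p-1), (k^9 % p)) * 2
        = ∑ k ∈ Finset.Icc 1 (p-1), (k^9 % p + (p-k)^9 % p) := by
          rw [Finset.sum_add_distrib, hrefl]; ring
      _ = ∑ _k ∈ Finset.Icc 1 (p-1), p := Finset.sum_congr rfl (fun k hk =>
            mod_pair p hp k (Finset.mem_Icc.mp hk).1 (Finset.mem_Icc.mp hk).2)
      _ = (p-1) * p := by rw [Finset.sum_const, Nat.card_Icc]; simp [Nat.smul_one_eq_cast]
      _ = p * (p-1) := Nat.mul_comm _ _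
  have hmodQ : (∑ k ∈ Finset.Icc 1 (p-1), ((k^9 % p : ℕ):ℚ)) = (p:ℚ) * ((p:ℚ)-1) / 2 := by
    have h2 : ((∑ k ∈ Finset.Icc 1 (p-1), (k ^ 9 % p) : ℕ) : ℚ) * 2
        = ((p : ℕ) : ℚ) * (((p-1 : ℕ)) : ℚ) := by exact_mod_cast congrArg (Nat.cast : ℕ → ℚ) hmod2
    rw [Nat.cast_sum] at h2
    rw [Nat.cast_sub (by omega : 1 ≤ p)] at h2
    push_cast at h2 ⊢
    linarith
  have hdm : ∀ k ∈ Finset.Icc 1 (p-1), (p:ℚ) * ((k ^ 9 / p : ℕ) : ℚ)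
      = (k:ℚ)^9 - ((k ^ 9 % p : ℕ) : ℚ) := by
    intro k hk
    have h := Nat.div_add_mod (k^9) p
    have h' : ((p * (k^9 / p) + k^9 % p : ℕ) : ℚ) = ((k^9 : ℕ) : ℚ) := by exact_mod_cast congrArg (Nat.cast : ℕ → ℚ) h
    push_cast at h'
    linarith
  have hmul : (p:ℚ) * (∑ k ∈ Finset.Icc 1 (p-1), ((k^9/p : ℕ):ℚ))
      = (∑ k ∈ Finset.Icc 1 (p-1), (k:ℚ)^9)
        - (∑ k ∈ Finset.Icc 1 (p-1), ((k^9 % p : ℕ):ℚ)) := by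
    rw [Finset.mul_sum, ← Finset.sum_sub_distrib]
    exact Finset.sum_congr rfl hdm
  rw [sum_pow_nine, hmodQ] at hmul
  have hc : ((p - 1 : ℕ) : ℚ) = (p:ℚ) - 1 := by
    rw [Nat.cast_sub (by omega : 1 ≤ p)]; norm_num
  rw [hc] at hmul
  apply mul_left_cancel₀ hpQ
  rw [hmul]
  field_simp
  ring
end

section
/- For every prime p ≥ 3 and integer q ≥ 1, 2p(2q+2) divides B_{2q+2}(p+1) + B_{2q+2}(p) - 2B_{2q+2} - p(2q+2)(p^{2q} + p - 1) in the sense that the rational number (B_{2q+2}(p+1) + B_{2q+2}(p) - 2B_{2q+2})/(2p(2q+2)) - (p^{2q}+p-1)/2 is a nonnegative integer. -/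
open Finset

lemma pair_res (p e : ℕ) (hp : p.Prime) (he : Odd e) (k : ℕ) (h1 : 1 ≤ k) (h2 : k < p) :
    k ^ e % p + (p - k) ^ e % p = p := by
  have hp0 : 0 < p := hp.pos
  have ha : k ^ e % p < p := Nat.mod_lt _ hp0
  have hb : (p - k) ^ e % p < p := Nat.mod_lt _ hp0
  have hane : k ^ e % p ≠ 0 := by
    intro h
    have : p ∣ k ^ e := Nat.dvd_of_mod_eq_zero h
    have hle := Nat.le_of_dvd (by omega) (hp.dvd_of_dvd_pow this)
    omega
  have hdvd : p ∣ (k ^ e % p + (p - k) ^ e % p) := by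
    have : ((k ^ e % p + (p - k) ^ e % p : ℕ) : ZMod p) = 0 := by
      push_cast
      have hpk : ((p - k : ℕ) : ZMod p) = -(k : ZMod p) := by
        have : ((p - k : ℕ) : ZMod p) + (k : ZMod p) = ((p : ℕ) : ZMod p) := by
          rw [← Nat.cast_add, Nat.sub_add_cancel h2.le]
        rw [ZMod.natCast_self] at this
        linear_combination this
      rw [ZMod.natCast_mod, ZMod.natCast_mod]
      push_cast
      rw [hpk, he.neg_pow]
      ring
    exact (ZMod.natCast_eq_zero_iff _ _).mp this
  have hpos : 0 < k ^ e % p + (p - k) ^ e % p := by omega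
  have hlt : k ^ e % p + (p - k) ^ e % p < 2 * p := by omega
  obtain ⟨c, hc⟩ := hdvd
  have h2' : p * c < p * 2 := by omega
  have hc2 : c < 2 := lt_of_mul_lt_mul_left h2' (Nat.zero_le p)
  have hc0 : c ≠ 0 := by rintro rfl; simp at hc; omega
  have : c = 1 := by omega
  subst this
  omega

lemma sum_res (p e : ℕ) (hp : p.Prime) (he : Odd e) :
    2 * ∑ k ∈ Ico 1 p, k ^ e % p = p * (p - 1) := by
  have hrefl : ∑ k ∈ Ico 1 p, (p - k) ^ e % p = ∑ k ∈ Ico 1 p, k ^ e % p := by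
    apply Finset.sum_nbij' (fun k => p - k) (fun k => p - k) <;>
      intro a ha <;> simp only [mem_Ico] at * <;> omega
  have : 2 * ∑ k ∈ Ico 1 p, k ^ e % p
      = ∑ k ∈ Ico 1 p, (k ^ e % p + (p - k) ^ e % p) := by
    rw [Finset.sum_add_distrib, hrefl]; ring
  rw [this, Finset.sum_congr rfl fun k hk => by
      simp only [mem_Ico] at hk; exact pair_res p e hp he k hk.1 hk.2]
  simp [Finset.sum_const, Nat.card_Ico, mul_comm]

theorem stmt_16 (p q : ℕ) (hp : p.Prime) (hp3 : 3 ≤ p) (hq : 1 ≤ q) :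
    ∃ m : ℤ, 0 ≤ m ∧
      ((Polynomial.bernoulli (2 * q + 2)).eval ((p : ℚ) + 1) +
        (Polynomial.bernoulli (2 * q + 2)).eval (p : ℚ) -
        2 * bernoulli (2 * q + 2)) / (2 * p * (2 * q + 2)) -
      ((p : ℚ) ^ (2 * q) + p - 1) / 2 = m := by
  set e := 2 * q + 1 with he_def
  have he : Odd e := ⟨q, by omega⟩
  set M : ℕ := ∑ k ∈ range p, k ^ e / p with hM
  refine ⟨(M : ℤ), by positivity, ?_⟩
  -- key nat identity
  have hsplit : ∀ k, k ^ e = p * (k ^ e / p) + k ^ e % p := fun k =>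
    (Nat.div_add_mod _ _).symm
  have hS : 2 * ∑ k ∈ range p, k ^ e = 2 * p * M + p * (p - 1) := by
    have h1 : ∑ k ∈ range p, k ^ e
        = p * M + ∑ k ∈ range p, k ^ e % p := by
      rw [hM, Finset.mul_sum, ← Finset.sum_add_distrib]
      exact Finset.sum_congr rfl fun k _ => hsplit k
    have h2 : ∑ k ∈ range p, k ^ e % p = ∑ k ∈ Ico 1 p, k ^ e % p := by
      rw [Finset.range_eq_Ico, Finset.sum_eq_sum_Ico_succ_bot (by omega)]
      simp [Nat.zero_pow (by omega : 0 < e)]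
    rw [h1, h2, mul_add, ← sum_res p e hp he]; ring
  -- Bernoulli evals
  have hn : 2 * q + 2 = e + 1 := by omega
  have hev1 : (Polynomial.bernoulli (2 * q + 2)).eval ((p : ℚ) + 1)
      = bernoulli (e + 1) + ((e : ℚ) + 1) * ∑ k ∈ range (p + 1), (k : ℚ) ^ e := by
    have := Polynomial.bernoulli_succ_eval (p + 1) e
    rw [hn]
    push_cast at this ⊢
    convert this using 3
  have hev2 : (Polynomial.bernoulli (2 * q + 2)).eval ((p : ℚ))
      = bernoulli (e + 1) + ((e : ℚ) + 1) * ∑ k ∈ range p, (k : ℚ) ^ e := by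
    have := Polynomial.bernoulli_succ_eval p e
    rw [hn]
    push_cast at this ⊢
    convert this using 3
  rw [hev1, hev2, hn]
  have hsucc : ∑ k ∈ range (p + 1), (k : ℚ) ^ e
      = (∑ k ∈ range p, (k : ℚ) ^ e) + (p : ℚ) ^ e := by
    rw [Finset.sum_range_succ]
  rw [hsucc]
  -- cast hS to ℚ
  have hp1 : 1 ≤ p := by omega
  have hSQ : 2 * ∑ k ∈ range p, (k : ℚ) ^ e
      = 2 * (p : ℚ) * M + (p : ℚ) * ((p : ℚ) - 1) := by
    have := congrArg (fun n : ℕ => (n : ℚ)) hS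
    push_cast [Nat.cast_sub hp1] at this
    convert this using 2
  have hpe : (p : ℚ) ^ e = (p : ℚ) * (p : ℚ) ^ (2 * q) := by
    rw [he_def, pow_succ]; ring
  have hp0 : (p : ℚ) ≠ 0 := by positivity
  have he0 : ((e : ℚ) + 1) ≠ 0 := by positivity
  field_simp
  push_cast
  have heQ : (e : ℚ) = 2 * q + 1 := by rw [he_def]; push_cast; ring
  linear_combination ((e : ℚ) + 1) * hSQ + ((e : ℚ) + 1) * hpe + (2 * (p : ℚ) * M + (p : ℚ) * ((p : ℚ) - 1) + (p : ℚ) * (p : ℚ) ^ (2 * q)) * heQ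
end
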